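/- Let S ⊆ 𝕊 be closed in the pcfb-topology and let K_S be the associated Grothendieck topology on the big cell 𝙳. Then for every supernatural number s, the following are equivalent: (i) s ∈ S; (ii) for every positive natural number n with n ∣ s and every K_S-covering sieve L on n, there exists m ∈ L with m ∣ s. -/

import Mathlib

open Topology

/-- A supernatural number: a function from the set of primes to `ℕ∞ = ℕ ∪ {∞}`,
thought of as the formal product `∏ p ^ (s p)`. -/
def Supernatural : Type := Nat.Primes → ℕ∞

/-- Divisibility of supernatural numbers: `s ∣ t` iff `s p ≤ t p` for every prime `p`. -/
instance : Dvd Supernatural := ⟨fun s t => ∀ p, s p ≤ t p⟩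

/-- The supernatural number associated to a positive natural number,
given by its prime factorization. -/
def natToSuper (n : ℕ+) : Supernatural := fun p => ((n : ℕ).factorization p : ℕ∞)

/-- The pcfb-topology on `𝕊`, generated by the sets `{x | n ∣ x ∧ x ∣ s}`
for `n` a positive natural number and `s` a supernatural number. -/
def pcfbTopology : TopologicalSpace Supernatural :=
  .generateFrom {U | ∃ (n : ℕ+) (t : Supernatural), U = {x | natToSuper n ∣ x ∧ x ∣ t}}

open CategoryTheory

/-- The big cell: the category whose objects are the positive natural numbers, with a
unique morphism `m ⟶ n` whenever `n ∣ m` (the opposite of the divisibility poset). -/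
def BigCell : Type := ℕ+

/-- The underlying positive natural number of an object of the big cell. -/
def BigCell.d : BigCell → ℕ+ := fun x => x

/-- The object of the big cell corresponding to a positive natural number. -/
def BigCell.of : ℕ+ → BigCell := fun x => x

/-- `m ≤ n` in the big cell iff `n ∣ m`; the induced category has a unique
morphism `m ⟶ n` whenever `n ∣ m`. -/
instance : Preorder BigCell where
  le m n := n.d ∣ m.d
  le_refl _ := dvd_refl _
  le_trans _ _ _ hab hbc := dvd_trans hbc hab


lemma sdvd_trans {a b c : Supernatural} (h1 : a ∣ b) (h2 : b ∣ c) : a ∣ c :=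
  fun p => le_trans (h1 p) (h2 p)

lemma natToSuper_dvd_of_dvd {a b : ℕ+} (h : (a:ℕ) ∣ (b:ℕ)) : natToSuper a ∣ natToSuper b := by
  intro p
  have := (Nat.factorization_le_iff_dvd a.ne_zero b.ne_zero).mpr h p
  simpa [natToSuper] using (Nat.cast_le (α := ℕ∞)).mpr this

def plcm (a b : ℕ+) : ℕ+ := ⟨Nat.lcm a b, Nat.pos_of_ne_zero (Nat.lcm_ne_zero a.ne_zero b.ne_zero)⟩

lemma natToSuper_plcm_dvd (a b : ℕ+) (x : Supernatural) :
    natToSuper (plcm a b) ∣ x ↔ natToSuper a ∣ x ∧ natToSuper b ∣ x := by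
  have hf : (Nat.lcm (a:ℕ) b).factorization = (a:ℕ).factorization ⊔ (b:ℕ).factorization :=
    Nat.factorization_lcm a.ne_zero b.ne_zero
  constructor
  · intro h
    constructor <;> intro p <;> refine le_trans ?_ (h p) <;>
      simp [natToSuper, plcm, hf, Finsupp.sup_apply, Nat.cast_le]
  · rintro ⟨h1, h2⟩ p
    have := max_le_iff.mpr ⟨h1 p, h2 p⟩
    simpa [natToSuper, plcm, hf, Finsupp.sup_apply, Nat.mono_cast.map_max] using this

def ppow (p : Nat.Primes) (k : ℕ) : ℕ+ := ⟨(p:ℕ)^k, pow_pos p.2.pos k⟩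

lemma natToSuper_ppow (p : Nat.Primes) (k : ℕ) (q : Nat.Primes) :
    natToSuper (ppow p k) q = if q = p then (k : ℕ∞) else 0 := by
  show (((((⟨(p:ℕ)^k, pow_pos p.2.pos k⟩ : ℕ+)):ℕ)).factorization (q:ℕ) : ℕ∞) = _
  rw [show ((⟨(p:ℕ)^k, pow_pos p.2.pos k⟩ : ℕ+) : ℕ) = (p:ℕ)^k from rfl, p.2.factorization_pow]
  by_cases h : q = p
  · subst h; simp
  · have : (q:ℕ) ≠ (p:ℕ) := fun hc => h (Subtype.ext hc)
    simp [Finsupp.single_apply, this.symm, h]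

lemma exists_basic {U : Set Supernatural}
    (h : TopologicalSpace.GenerateOpen
      {U | ∃ (n : ℕ+) (t : Supernatural), U = {x | natToSuper n ∣ x ∧ x ∣ t}} U)
    {s : Supernatural} (hs : s ∈ U) :
    ∃ (n : ℕ+) (t : Supernatural), natToSuper n ∣ s ∧ s ∣ t ∧
      ∀ x, natToSuper n ∣ x → x ∣ t → x ∈ U := by
  induction h with
  | basic V hV =>
    obtain ⟨n, t, rfl⟩ := hV
    exact ⟨n, t, hs.1, hs.2, fun x h1 h2 => ⟨h1, h2⟩⟩
  | univ => exact ⟨1, fun _ => ⊤, fun p => by simp [natToSuper], fun p => le_top,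
      fun _ _ _ => trivial⟩
  | inter V W _ _ ihV ihW =>
    obtain ⟨n1, t1, ha1, hb1, hc1⟩ := ihV hs.1
    obtain ⟨n2, t2, ha2, hb2, hc2⟩ := ihW hs.2
    refine ⟨plcm n1 n2, fun p => min (t1 p) (t2 p),
      (natToSuper_plcm_dvd _ _ _).mpr ⟨ha1, ha2⟩,
      fun p => le_min (hb1 p) (hb2 p), fun x h1 h2 => ?_⟩
    rw [natToSuper_plcm_dvd] at h1
    exact ⟨hc1 x h1.1 (fun p => (h2 p).trans (min_le_left _ _)),
      hc2 x h1.2 (fun p => (h2 p).trans (min_le_right _ _))⟩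
  | sUnion F _ ih =>
    obtain ⟨V, hVF, hsV⟩ := hs
    obtain ⟨n, t, h1, h2, h3⟩ := ih V hVF hsV
    exact ⟨n, t, h1, h2, fun x hx1 hx2 => ⟨V, hVF, h3 x hx1 hx2⟩⟩

theorem stmt7 (S : Set Supernatural) (hS : IsClosed[pcfbTopology] S)
    (J : GrothendieckTopology BigCell)
    (hJ : ∀ (n : BigCell) (L : Sieve n),
      L ∈ J.sieves n ↔ ∀ s ∈ S, natToSuper n.d ∣ s →
        ∃ (m : BigCell) (f : m ⟶ n), L.arrows f ∧ natToSuper m.d ∣ s)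
    (s : Supernatural) :
    s ∈ S ↔
      ∀ (n : BigCell), natToSuper n.d ∣ s → ∀ L : Sieve n, L ∈ J.sieves n →
        ∃ (m : BigCell) (f : m ⟶ n), L.arrows f ∧ natToSuper m.d ∣ s := by
  constructor
  · intro hsS n hns L hL
    exact (hJ n L).mp hL s hsS hns
  · intro H
    by_contra hsS
    have ho : TopologicalSpace.GenerateOpen
        {U | ∃ (n : ℕ+) (t : Supernatural), U = {x | natToSuper n ∣ x ∧ x ∣ t}} Sᶜ :=
      hS.isOpen_compl
    obtain ⟨n, t, hn, hst, hsub⟩ := exists_basic ho (hsS : s ∈ Sᶜ)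
    set L : Sieve (BigCell.of n) :=
      { arrows := fun m _ => ¬ natToSuper (BigCell.d m) ∣ t
        downward_closed := by
          intro Y Z f hf g hc
          exact hf (sdvd_trans (natToSuper_dvd_of_dvd
            (PNat.dvd_iff.mp (leOfHom g : BigCell.d Y ∣ BigCell.d Z))) hc) } with hLdef
    have hcov : L ∈ J.sieves (BigCell.of n) := by
      rw [hJ]
      intro u hu hnu
      have hut : ¬ u ∣ t := by
        intro hut
        exact (hsub u hnu hut) hu
      have : ∃ p, t p < u p := by
        by_contra hc
        push_neg at hc
        exact hut fun p => hc p
      obtain ⟨p, hp⟩ := this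
      have htop : t p ≠ ⊤ := (lt_of_lt_of_le hp le_top).ne
      set k := (t p).toNat with hkdef
      have hk : (k : ℕ∞) = t p := ENat.coe_toNat htop
      refine ⟨BigCell.of (plcm n (ppow p (k+1))), homOfLE ?_, ?_, ?_⟩
      · show (n : ℕ+) ∣ plcm n (ppow p (k+1))
        exact PNat.dvd_iff.mpr (Nat.dvd_lcm_left (n:ℕ) ((ppow p (k+1)):ℕ))
      · show ¬ natToSuper (plcm n (ppow p (k+1))) ∣ t
        intro h
        have h2 := ((natToSuper_plcm_dvd _ _ _).mp h).2 p
        rw [natToSuper_ppow, if_pos rfl, ← hk] at h2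
        exact absurd (Nat.cast_le.mp h2) (Nat.not_succ_le_self k)
      · show natToSuper (plcm n (ppow p (k+1))) ∣ u
        refine (natToSuper_plcm_dvd _ _ _).mpr ⟨hnu, fun q => ?_⟩
        rw [natToSuper_ppow]
        by_cases hq : q = p
        · subst hq
          rw [if_pos rfl]
          have : (k : ℕ∞) < u q := by rw [hk]; exact hp
          calc ((k+1 : ℕ) : ℕ∞) = (k : ℕ∞) + 1 := by push_cast; ring
            _ ≤ u q := Order.add_one_le_of_lt this
        · rw [if_neg hq]; exact zero_le
    obtain ⟨m, f, harr, hdvd⟩ := H (BigCell.of n) hn L hcov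
    exact harr (sdvd_trans hdvd hst)
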